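/- Weighted-objective optimum lies on the Pareto frontier: fix a finite game with utilities in [0,1] that possesses at least one coarse correlated equilibrium, and fix w ∈ [0,1). Define expl(π) = max_{i} max_{â_i∈𝒜_i} E_{a∼π}[𝒰_i(â_i, a_{−i}) − 𝒰_i(a)] and g(π) = max_{â∈𝒜} (1/N) Σ_{i=1}^N E_{a∼π}[𝒰_i(â) − 𝒰_i(a)]. Let π* be any minimizer over Δ(𝒜) of the weighted objective W(π) = max(w · expl(π), (1 − w) · g(π)), and set ε = expl(π*). Then π* maximizes social welfare subject to the exploitability budget ε: for every joint strategy π with expl(π) ≤ ε, SW(π) ≤ SW(π*), where SW(π) = Σ_{i=1}^N E_{a∼π}[𝒰_i(a)]. -/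
import Mathlib


open Finset

/-- A probability distribution on a finite type. -/
def IsDist {X : Type*} [Fintype X] (p : X → ℝ) : Prop :=
  (∀ x, 0 ≤ p x) ∧ ∑ x, p x = 1

/-- The exploitability of a joint strategy:
`max_{i} max_{â_i ∈ 𝒜_i} E_{a∼π}[𝒰_i(â_i, a_{−i}) − 𝒰_i(a)]`. -/
noncomputable def expl {N : ℕ} {A : Fin N → Type} [∀ i, Fintype (A i)] [∀ i, DecidableEq (A i)]
    (U : Fin N → ((i : Fin N) → A i) → ℝ) (π : ((i : Fin N) → A i) → ℝ) : ℝ :=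
  sSup {x | ∃ (i : Fin N) (b : A i),
    x = ∑ a, π a * (U i (Function.update a i b) - U i a)}

/-- Social welfare: the sum of all players' expected utilities. -/
noncomputable def SW {N : ℕ} {A : Fin N → Type} [∀ i, Fintype (A i)]
    (U : Fin N → ((i : Fin N) → A i) → ℝ) (π : ((i : Fin N) → A i) → ℝ) : ℝ :=
  ∑ i, ∑ a, π a * U i a

/-- The exploitability welfare frontier: the maximum social welfare over all `ε`-CCEs. -/
noncomputable def EWF {N : ℕ} {A : Fin N → Type} [∀ i, Fintype (A i)] [∀ i, DecidableEq (A i)]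
    (U : Fin N → ((i : Fin N) → A i) → ℝ) (ε : ℝ) : ℝ :=
  sSup {x | ∃ π, IsDist π ∧ expl U π ≤ ε ∧ x = SW U π}

/-- The grand-coalition average deviation gain:
`g(π) = max_{â∈𝒜} (1/N) Σ_{i=1}^N E_{a∼π}[𝒰_i(â) − 𝒰_i(a)]`. -/
noncomputable def gGrand {N : ℕ} {A : Fin N → Type} [∀ i, Fintype (A i)]
    (U : Fin N → ((i : Fin N) → A i) → ℝ) (π : ((i : Fin N) → A i) → ℝ) : ℝ :=
  sSup {x | ∃ dev : (i : Fin N) → A i,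
    x = (N : ℝ)⁻¹ * ∑ i, ∑ a, π a * (U i dev - U i a)}

section helpers
variable {N : ℕ} {A : Fin N → Type} [∀ i, Fintype (A i)] [∀ i, DecidableEq (A i)]
  [∀ i, Nonempty (A i)]

lemma explSet_eq (U : Fin N → ((i : Fin N) → A i) → ℝ) (π : ((i : Fin N) → A i) → ℝ) :
    {x | ∃ (i : Fin N) (b : A i),
      x = ∑ a, π a * (U i (Function.update a i b) - U i a)} =
    Set.range (fun p : Σ i : Fin N, A i =>
      ∑ a, π a * (U p.1 (Function.update a p.1 p.2) - U p.1 a)) := by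
  ext x
  constructor
  · rintro ⟨i, b, h⟩; exact ⟨⟨i, b⟩, h.symm⟩
  · rintro ⟨⟨i, b⟩, h⟩; exact ⟨i, b, h.symm⟩

lemma explSet_bdd (U : Fin N → ((i : Fin N) → A i) → ℝ) (π : ((i : Fin N) → A i) → ℝ) :
    BddAbove {x | ∃ (i : Fin N) (b : A i),
      x = ∑ a, π a * (U i (Function.update a i b) - U i a)} := by
  rw [explSet_eq]; exact (Set.finite_range _).bddAbove

lemma gSet_eq (U : Fin N → ((i : Fin N) → A i) → ℝ) (π : ((i : Fin N) → A i) → ℝ) :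
    {x | ∃ dev : (i : Fin N) → A i,
      x = (N : ℝ)⁻¹ * ∑ i, ∑ a, π a * (U i dev - U i a)} =
    Set.range (fun dev : (i : Fin N) → A i =>
      (N : ℝ)⁻¹ * ∑ i, ∑ a, π a * (U i dev - U i a)) := by
  ext x; simp [Set.range, eq_comm]

lemma gSet_bdd (U : Fin N → ((i : Fin N) → A i) → ℝ) (π : ((i : Fin N) → A i) → ℝ) :
    BddAbove {x | ∃ dev : (i : Fin N) → A i,
      x = (N : ℝ)⁻¹ * ∑ i, ∑ a, π a * (U i dev - U i a)} := by
  rw [gSet_eq]; exact (Set.finite_range _).bddAbove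

lemma gSet_nonempty (U : Fin N → ((i : Fin N) → A i) → ℝ) (π : ((i : Fin N) → A i) → ℝ) :
    {x | ∃ dev : (i : Fin N) → A i,
      x = (N : ℝ)⁻¹ * ∑ i, ∑ a, π a * (U i dev - U i a)}.Nonempty :=
  ⟨_, Classical.arbitrary _, rfl⟩

/-- value of a grand deviation in terms of SW -/
lemma gVal_eq (U : Fin N → ((i : Fin N) → A i) → ℝ) {π : ((i : Fin N) → A i) → ℝ}
    (hπ : IsDist π) (dev : (i : Fin N) → A i) :
    (N : ℝ)⁻¹ * ∑ i, ∑ a, π a * (U i dev - U i a)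
      = (N : ℝ)⁻¹ * ((∑ i, U i dev) - SW U π) := by
  congr 1
  rw [SW, ← Finset.sum_sub_distrib]
  apply Finset.sum_congr rfl
  intro i _
  have h : ∑ a, (π a * (U i dev - U i a)) = ∑ a, (π a * U i dev - π a * U i a) := by
    apply Finset.sum_congr rfl; intros; ring
  rw [h, Finset.sum_sub_distrib, ← Finset.sum_mul, hπ.2, one_mul]

lemma gGrand_lt (U : Fin N → ((i : Fin N) → A i) → ℝ)
    {π π' : ((i : Fin N) → A i) → ℝ} (hN : 0 < N)
    (hπ : IsDist π) (hπ' : IsDist π') (h : SW U π' < SW U π) :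
    gGrand U π < gGrand U π' := by
  have hfin : {x | ∃ dev : (i : Fin N) → A i,
      x = (N : ℝ)⁻¹ * ∑ i, ∑ a, π a * (U i dev - U i a)}.Finite := by
    rw [gSet_eq]; exact Set.finite_range _
  obtain ⟨dev, hdev⟩ := (gSet_nonempty U π).csSup_mem hfin
  have hNpos : (0:ℝ) < (N : ℝ)⁻¹ := by positivity
  calc gGrand U π = (N : ℝ)⁻¹ * ((∑ i, U i dev) - SW U π) := by
        rw [gGrand, hdev, gVal_eq U hπ]
    _ < (N : ℝ)⁻¹ * ((∑ i, U i dev) - SW U π') := by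
        apply mul_lt_mul_of_pos_left _ hNpos; linarith
    _ = (N : ℝ)⁻¹ * ∑ i, ∑ a, π' a * (U i dev - U i a) := (gVal_eq U hπ' dev).symm
    _ ≤ gGrand U π' := le_csSup (gSet_bdd U π') ⟨dev, rfl⟩

lemma gGrand_nonneg (U : Fin N → ((i : Fin N) → A i) → ℝ)
    {π : ((i : Fin N) → A i) → ℝ} (hπ : IsDist π) : 0 ≤ gGrand U π := by
  obtain ⟨astar, -, hmax⟩ := Finset.exists_max_image Finset.univ
    (fun a : (i : Fin N) → A i => ∑ i, U i a) Finset.univ_nonempty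
  have hSW : SW U π ≤ ∑ i, U i astar := by
    have : SW U π = ∑ a, π a * ∑ i, U i a := by
      rw [SW, Finset.sum_comm]
      apply Finset.sum_congr rfl
      intros; rw [Finset.mul_sum]
    rw [this]
    calc ∑ a, π a * ∑ i, U i a ≤ ∑ a, π a * ∑ i, U i astar := by
          apply Finset.sum_le_sum
          intro a _
          exact mul_le_mul_of_nonneg_left (hmax a (Finset.mem_univ a)) (hπ.1 a)
      _ = ∑ i, U i astar := by rw [← Finset.sum_mul, hπ.2, one_mul]
  have : (0:ℝ) ≤ (N : ℝ)⁻¹ * ((∑ i, U i astar) - SW U π) := by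
    have : (0:ℝ) ≤ (N:ℝ)⁻¹ := by positivity
    nlinarith
  calc (0:ℝ) ≤ (N : ℝ)⁻¹ * ((∑ i, U i astar) - SW U π) := this
    _ = (N : ℝ)⁻¹ * ∑ i, ∑ a, π a * (U i astar - U i a) := (gVal_eq U hπ astar).symm
    _ ≤ gGrand U π := le_csSup (gSet_bdd U π) ⟨astar, rfl⟩

lemma gGrand_le_one (U : Fin N → ((i : Fin N) → A i) → ℝ)
    (hU : ∀ i a, U i a ∈ Set.Icc (0 : ℝ) 1)
    {π : ((i : Fin N) → A i) → ℝ} (hπ : IsDist π) : gGrand U π ≤ 1 := by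
  apply csSup_le (gSet_nonempty U π)
  rintro x ⟨dev, rfl⟩
  have hinner : ∀ i : Fin N, ∑ a, π a * (U i dev - U i a) ≤ 1 := by
    intro i
    calc ∑ a, π a * (U i dev - U i a) ≤ ∑ a, π a * 1 := by
          apply Finset.sum_le_sum
          intro a _
          apply mul_le_mul_of_nonneg_left _ (hπ.1 a)
          have h1 := (hU i dev).2
          have h2 := (hU i a).1
          linarith
      _ = 1 := by rw [← Finset.sum_mul, hπ.2, one_mul]
  calc (N : ℝ)⁻¹ * ∑ i, ∑ a, π a * (U i dev - U i a)
      ≤ (N : ℝ)⁻¹ * ∑ _i : Fin N, (1:ℝ) := by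
        apply mul_le_mul_of_nonneg_left _ (by positivity)
        exact Finset.sum_le_sum (fun i _ => hinner i)
    _ ≤ 1 := by
        rcases Nat.eq_zero_or_pos N with h | h
        · simp [h]
        · have : (0:ℝ) < (N:ℝ) := by exact_mod_cast h
          simp only [Finset.sum_const, Finset.card_univ, Fintype.card_fin, nsmul_eq_mul]
          rw [mul_one, inv_mul_cancel₀ (ne_of_gt this)]

lemma expl_mix_le (hN : 0 < N) (U : Fin N → ((i : Fin N) → A i) → ℝ)
    (π π₀ : ((i : Fin N) → A i) → ℝ) {s : ℝ} (hs0 : 0 ≤ s) (hs1 : s ≤ 1) :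
    expl U (fun a => (1 - s) * π a + s * π₀ a) ≤ (1 - s) * expl U π + s * expl U π₀ := by
  apply csSup_le
  · have : Nonempty (Fin N) := ⟨⟨0, hN⟩⟩
    obtain i : Fin N := Classical.arbitrary _
    obtain b : A i := Classical.arbitrary _
    exact ⟨_, i, b, rfl⟩
  · rintro x ⟨i, b, rfl⟩
    have h1 : ∑ a, π a * (U i (Function.update a i b) - U i a) ≤ expl U π :=
      le_csSup (explSet_bdd U π) ⟨i, b, rfl⟩
    have h2 : ∑ a, π₀ a * (U i (Function.update a i b) - U i a) ≤ expl U π₀ :=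
      le_csSup (explSet_bdd U π₀) ⟨i, b, rfl⟩
    have heq : ∑ a, ((1 - s) * π a + s * π₀ a) * (U i (Function.update a i b) - U i a)
        = (1 - s) * (∑ a, π a * (U i (Function.update a i b) - U i a))
          + s * (∑ a, π₀ a * (U i (Function.update a i b) - U i a)) := by
      rw [Finset.mul_sum, Finset.mul_sum, ← Finset.sum_add_distrib]
      apply Finset.sum_congr rfl; intros; ring
    rw [heq]
    have hs1' : (0:ℝ) ≤ 1 - s := by linarith
    exact add_le_add (mul_le_mul_of_nonneg_left h1 hs1') (mul_le_mul_of_nonneg_left h2 hs0)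

lemma gGrand_mix_le (U : Fin N → ((i : Fin N) → A i) → ℝ)
    (π π₀ : ((i : Fin N) → A i) → ℝ) {s : ℝ} (hs0 : 0 ≤ s) (hs1 : s ≤ 1) :
    gGrand U (fun a => (1 - s) * π a + s * π₀ a)
      ≤ (1 - s) * gGrand U π + s * gGrand U π₀ := by
  apply csSup_le (gSet_nonempty U _)
  rintro x ⟨dev, rfl⟩
  have h1 : (N : ℝ)⁻¹ * ∑ i, ∑ a, π a * (U i dev - U i a) ≤ gGrand U π :=
    le_csSup (gSet_bdd U π) ⟨dev, rfl⟩
  have h2 : (N : ℝ)⁻¹ * ∑ i, ∑ a, π₀ a * (U i dev - U i a) ≤ gGrand U π₀ :=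
    le_csSup (gSet_bdd U π₀) ⟨dev, rfl⟩
  have heq : (N : ℝ)⁻¹ * ∑ i, ∑ a, ((1 - s) * π a + s * π₀ a) * (U i dev - U i a)
      = (1 - s) * ((N : ℝ)⁻¹ * ∑ i, ∑ a, π a * (U i dev - U i a))
        + s * ((N : ℝ)⁻¹ * ∑ i, ∑ a, π₀ a * (U i dev - U i a)) := by
    have : ∀ i : Fin N, ∑ a, ((1 - s) * π a + s * π₀ a) * (U i dev - U i a)
        = (1 - s) * (∑ a, π a * (U i dev - U i a))
          + s * (∑ a, π₀ a * (U i dev - U i a)) := by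
      intro i
      rw [Finset.mul_sum, Finset.mul_sum, ← Finset.sum_add_distrib]
      apply Finset.sum_congr rfl; intros; ring
    simp only [this, Finset.sum_add_distrib, ← Finset.mul_sum]
    ring
  rw [heq]
  have hs1' : (0:ℝ) ≤ 1 - s := by linarith
  exact add_le_add (mul_le_mul_of_nonneg_left h1 hs1') (mul_le_mul_of_nonneg_left h2 hs0)

end helpers

/-- Weighted-objective optimum lies on the Pareto frontier: in a game possessing a CCE,
for `w ∈ [0,1)`, any minimizer `π*` of `W(π) = max(w·expl(π), (1−w)·g(π))` maximizes
social welfare among all joint strategies whose exploitability is at most `expl(π*)`. -/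
theorem stmt11 {N : ℕ} {A : Fin N → Type} [∀ i, Fintype (A i)] [∀ i, DecidableEq (A i)]
    [∀ i, Nonempty (A i)] (hN : 0 < N)
    (U : Fin N → ((i : Fin N) → A i) → ℝ) (hU : ∀ i a, U i a ∈ Set.Icc (0 : ℝ) 1)
    (hCCE : ∃ π₀, IsDist π₀ ∧ expl U π₀ ≤ 0)
    (w : ℝ) (hw0 : 0 ≤ w) (hw1 : w < 1)
    (πstar : ((i : Fin N) → A i) → ℝ) (hπstar : IsDist πstar)
    (hmin : ∀ π, IsDist π →
      max (w * expl U πstar) ((1 - w) * gGrand U πstar) ≤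
        max (w * expl U π) ((1 - w) * gGrand U π)) :
    ∀ π, IsDist π → expl U π ≤ expl U πstar → SW U π ≤ SW U πstar := by
  intro π hπ hexplπ
  by_contra hSW
  push_neg at hSW
  obtain ⟨π₀, hπ₀, hexpl₀⟩ := hCCE
  have hg : gGrand U π < gGrand U πstar := gGrand_lt U hN hπ hπstar hSW
  have hδ : 0 < gGrand U πstar - gGrand U π := by linarith
  set δ : ℝ := gGrand U πstar - gGrand U π with hδdef
  set s : ℝ := min (1/2) (δ/2) with hsdef
  have hs0 : 0 < s := lt_min (by norm_num) (by linarith)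
  have hs1 : s ≤ 1 := le_trans (min_le_left _ _) (by norm_num)
  have hsδ : s < δ := lt_of_le_of_lt (min_le_right _ _) (by linarith)
  set πs : ((i : Fin N) → A i) → ℝ := fun a => (1 - s) * π a + s * π₀ a with hπsdef
  have hπs : IsDist πs := by
    constructor
    · intro a
      have h1 := hπ.1 a
      have h2 := hπ₀.1 a
      have h3 : (0:ℝ) ≤ 1 - s := by linarith
      exact add_nonneg (mul_nonneg h3 h1) (mul_nonneg hs0.le h2)
    · show ∑ a, ((1 - s) * π a + s * π₀ a) = 1
      rw [Finset.sum_add_distrib, ← Finset.mul_sum, ← Finset.mul_sum, hπ.2, hπ₀.2]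
      ring
  have hgπ0 : 0 ≤ gGrand U π := gGrand_nonneg U hπ
  have hg0le1 : gGrand U π₀ ≤ 1 := gGrand_le_one U hU hπ₀
  have hEmix : expl U πs ≤ (1 - s) * expl U πstar := by
    have hm := expl_mix_le hN U π π₀ hs0.le hs1
    have h2 : (1 - s) * expl U π ≤ (1 - s) * expl U πstar :=
      mul_le_mul_of_nonneg_left hexplπ (by linarith)
    have h3 : s * expl U π₀ ≤ 0 := mul_nonpos_of_nonneg_of_nonpos hs0.le hexpl₀
    linarith
  have hGmix : gGrand U πs < gGrand U πstar := by
    have hm := gGrand_mix_le U π π₀ hs0.le hs1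
    nlinarith
  have hW := hmin πs hπs
  have hgstar : 0 < gGrand U πstar := lt_of_le_of_lt hgπ0 hg
  have h1 : w * expl U πs < max (w * expl U πstar) ((1 - w) * gGrand U πstar) := by
    have hA : w * expl U πs ≤ (1 - s) * (w * expl U πstar) := by
      have := mul_le_mul_of_nonneg_left hEmix hw0
      nlinarith
    rcases lt_or_ge 0 (w * expl U πstar) with hpos | hnonpos
    · have hB : (1 - s) * (w * expl U πstar) < w * expl U πstar := by nlinarith
      exact lt_of_le_of_lt hA (lt_of_lt_of_le hB (le_max_left _ _))
    · have hB : (1 - s) * (w * expl U πstar) ≤ 0 :=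
        mul_nonpos_of_nonneg_of_nonpos (by linarith) hnonpos
      have hC : 0 < (1 - w) * gGrand U πstar := mul_pos (by linarith) hgstar
      exact lt_of_le_of_lt (le_trans hA hB) (lt_of_lt_of_le hC (le_max_right _ _))
  have h2 : (1 - w) * gGrand U πs < max (w * expl U πstar) ((1 - w) * gGrand U πstar) :=
    lt_of_lt_of_le (mul_lt_mul_of_pos_left hGmix (by linarith)) (le_max_right _ _)
  have hcontra := max_lt h1 h2
  linarith [le_trans hW hcontra.le]
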